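/- Let N be a complete, locally compact length metric space with proper metric (closed balls compact), and let p : Ñ → N be a covering map with Ñ path-connected, equipped with the lifted length metric. Then every closed ball in Ñ is compact. -/

import Mathlib

open ENNReal

section Aux

open Set

private lemma trunc_left_aux {N' X : Type*} [TopologicalSpace N'] [PseudoEMetricSpace X]
    (q : N' → X) {a b : N'} (γ : Path a b) (t0 : unitInterval) :
    ∃ δ : Path a (γ t0), eVariationOn (q ∘ ⇑δ) Set.univ = eVariationOn (q ∘ ⇑γ) (Set.Icc 0 t0) := by
  set φ : unitInterval → unitInterval := fun s => ⟨min (s : ℝ) (t0 : ℝ),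
    ⟨le_min s.2.1 t0.2.1, min_le_of_left_le s.2.2⟩⟩ with hφ
  have hcont : Continuous φ := Continuous.subtype_mk (continuous_subtype_val.min continuous_const) _
  have hmono : Monotone φ := fun s t hst =>
    Subtype.mk_le_mk.mpr (min_le_min (Subtype.coe_le_coe.mpr hst) le_rfl)
  have himg : φ '' Set.univ = Set.Icc 0 t0 := by
    ext z
    constructor
    · rintro ⟨s, -, rfl⟩
      exact ⟨Subtype.mk_le_mk.mpr (le_min s.2.1 t0.2.1), Subtype.mk_le_mk.mpr (min_le_right _ _)⟩
    · rintro ⟨hz0, hz1⟩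
      exact ⟨z, Set.mem_univ _, Subtype.ext (min_eq_left hz1)⟩
  have h0 : φ 0 = 0 := Subtype.ext (by simp [hφ, t0.2.1])
  have h1 : φ 1 = t0 := Subtype.ext (by simp [hφ, t0.2.2])
  refine ⟨⟨⟨fun s => γ (φ s), γ.continuous.comp hcont⟩, by simp [h0], by simp [h1]⟩, ?_⟩
  have := eVariationOn.comp_eq_of_monotoneOn (q ∘ ⇑γ) φ (hmono.monotoneOn Set.univ)
  rw [himg] at this
  exact this

private lemma trunc_right_aux {N' X : Type*} [TopologicalSpace N'] [PseudoEMetricSpace X]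
    (q : N' → X) {a b : N'} (γ : Path a b) (t0 : unitInterval) :
    ∃ δ : Path (γ t0) b, eVariationOn (q ∘ ⇑δ) Set.univ = eVariationOn (q ∘ ⇑γ) (Set.Icc t0 1) := by
  set φ : unitInterval → unitInterval := fun s => ⟨max (s : ℝ) (t0 : ℝ),
    ⟨le_max_of_le_left s.2.1, max_le s.2.2 t0.2.2⟩⟩ with hφ
  have hcont : Continuous φ := Continuous.subtype_mk (continuous_subtype_val.max continuous_const) _
  have hmono : Monotone φ := fun s t hst =>
    Subtype.mk_le_mk.mpr (max_le_max (Subtype.coe_le_coe.mpr hst) le_rfl)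
  have himg : φ '' Set.univ = Set.Icc t0 1 := by
    ext z
    constructor
    · rintro ⟨s, -, rfl⟩
      exact ⟨Subtype.mk_le_mk.mpr (le_max_right _ _), Subtype.mk_le_mk.mpr (max_le s.2.2 t0.2.2)⟩
    · rintro ⟨hz0, hz1⟩
      exact ⟨z, Set.mem_univ _, Subtype.ext (max_eq_left hz0)⟩
  have h0 : φ 0 = t0 := Subtype.ext (by simp [hφ, t0.2.1])
  have h1 : φ 1 = 1 := Subtype.ext (by simp [hφ, t0.2.2])
  refine ⟨⟨⟨fun s => γ (φ s), γ.continuous.comp hcont⟩, by simp [h0], by simp [h1]⟩, ?_⟩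
  have := eVariationOn.comp_eq_of_monotoneOn (q ∘ ⇑γ) φ (hmono.monotoneOn Set.univ)
  rw [himg] at this
  exact this

private lemma lip_of_hlift_aux {N N' : Type*} [MetricSpace N] [MetricSpace N'] (p : N' → N)
    (hlift : ∀ x y : N', ENNReal.ofReal (dist x y) =
      ⨅ γ : Path x y, eVariationOn (p ∘ ⇑γ) Set.univ) :
    ∀ a b : N', dist (p a) (p b) ≤ dist a b := by
  intro a b
  have h : edist (p a) (p b) ≤ ENNReal.ofReal (dist a b) := by
    rw [hlift]
    refine le_iInf fun γ => ?_
    have := eVariationOn.edist_le (p ∘ ⇑γ) (Set.mem_univ (0 : unitInterval)) (Set.mem_univ 1)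
    simpa using this
  rw [edist_dist] at h
  exact (ENNReal.ofReal_le_ofReal_iff dist_nonneg).mp h

private lemma local_cpt_aux {N N' : Type*} [MetricSpace N] [MetricSpace N'] [ProperSpace N]
    (p : N' → N) (hp : IsCoveringMap p)
    (hlift : ∀ x y : N', ENNReal.ofReal (dist x y) =
      ⨅ γ : Path x y, eVariationOn (p ∘ ⇑γ) Set.univ)
    {ε : ℝ} (hε : 0 < ε) (y : N') {F : Type*} [TopologicalSpace F] (e : Bundle.Trivialization F p)
    (hsub : Metric.ball (p y) (3 * ε) ⊆ e.baseSet) :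
    IsCompact (Metric.closedBall y ε) := by
  have hlip := lip_of_hlift_aux p hlift
  have hymem : p y ∈ e.baseSet := hsub (Metric.mem_ball_self (by linarith))
  have hysrc : y ∈ e.source := e.mem_source.mpr hymem
  set s : N → N' := fun z => e.toOpenPartialHomeomorph.symm (z, (e y).2) with hs
  have hsect : ∀ z ∈ e.baseSet, p (s z) = z := by
    intro z hz
    exact e.proj_symm_apply (e.mem_target.mpr hz)
  have hsy : s (p y) = y := by
    have h1 : ((p y), (e y).2) = e y := by
      rw [← e.coe_fst hysrc]
    rw [hs]
    simp only
    rw [h1]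
    exact e.toOpenPartialHomeomorph.left_inv hysrc
  have hscont : ContinuousOn s e.baseSet := by
    have := e.toOpenPartialHomeomorph.continuousOn_symm
    refine this.comp (Continuous.continuousOn (by continuity)) ?_
    intro z hz
    exact e.mem_target.mpr hz
  have hincl : Metric.closedBall y ε ⊆ s '' Metric.closedBall (p y) (2 * ε) := by
    intro w hw
    have hdw : dist y w ≤ ε := by simpa [dist_comm] using hw
    have hlt : (⨅ γ : Path y w, eVariationOn (p ∘ ⇑γ) Set.univ) < ENNReal.ofReal (2 * ε) := by
      rw [← hlift]
      exact ENNReal.ofReal_lt_ofReal_iff (by linarith) |>.mpr (by linarith)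
    obtain ⟨γ, hγ⟩ := iInf_lt_iff.mp hlt
    set g : unitInterval → N := p ∘ ⇑γ with hg
    have hg0 : g 0 = p y := by simp [hg]
    have hball : ∀ t, g t ∈ Metric.ball (p y) (3 * ε) := by
      intro t
      have h1 : edist (g 0) (g t) ≤ eVariationOn g Set.univ :=
        eVariationOn.edist_le g (Set.mem_univ 0) (Set.mem_univ t)
      have h2 : edist (g 0) (g t) < ENNReal.ofReal (2 * ε) := lt_of_le_of_lt h1 hγ
      rw [hg0] at h2
      rw [edist_dist] at h2
      have := (ENNReal.ofReal_lt_ofReal_iff (by linarith)).mp h2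
      rw [Metric.mem_ball, dist_comm]
      linarith
    have hcomp : ⇑γ = s ∘ g := by
      refine hp.eq_of_comp_eq γ.continuous ?_ ?_ 0 ?_
      · exact hscont.comp_continuous (hp.continuous.comp γ.continuous) (fun t => hsub (hball t))
      · funext t
        simp only [Function.comp_apply]
        rw [hsect _ (hsub (hball t))]
        rfl
      · simp only [Function.comp_apply]
        rw [hg0, hsy, γ.source]
    have hw1 : w = s (g 1) := by
      have := congrFun hcomp 1
      simpa [γ.target] using this
    refine ⟨g 1, ?_, hw1.symm⟩
    have : dist (p y) (g 1) ≤ ε := by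
      have : g 1 = p w := by simp [hg, γ.target]
      rw [this]
      calc dist (p y) (p w) ≤ dist y w := hlip y w
        _ ≤ ε := hdw
    rw [Metric.mem_closedBall, dist_comm]
    linarith
  have hcpt2 : IsCompact (s '' Metric.closedBall (p y) (2 * ε)) := by
    refine (isCompact_closedBall (p y) (2 * ε)).image_of_continuousOn (hscont.mono ?_)
    intro z hz
    refine hsub ?_
    rw [Metric.mem_closedBall] at hz
    rw [Metric.mem_ball]
    linarith [hz]
  exact hcpt2.of_isClosed_subset Metric.isClosed_closedBall hincl

private lemma split_point_aux {N N' : Type*} [MetricSpace N] [MetricSpace N']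
    (p : N' → N)
    (hlift : ∀ x y : N', ENNReal.ofReal (dist x y) =
      ⨅ γ : Path x y, eVariationOn (p ∘ ⇑γ) Set.univ)
    (x w : N') {ρ : ℝ} (hρ0 : 0 ≤ ρ) (hρlt : ρ ≤ dist x w) {η : ℝ} (hη : 0 < η) :
    ∃ y : N', dist x y = ρ ∧ dist y w ≤ dist x w - ρ + η := by
  have hlt : (⨅ γ : Path x w, eVariationOn (p ∘ ⇑γ) Set.univ)
      < ENNReal.ofReal (dist x w + η) := by
    rw [← hlift]
    exact (ENNReal.ofReal_lt_ofReal_iff (by positivity)).mpr (by linarith)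
  obtain ⟨γ, hγ⟩ := iInf_lt_iff.mp hlt
  set g : unitInterval → N := p ∘ ⇑γ with hg
  have hF : Continuous fun t : ℝ => dist x (γ.extend t) :=
    (continuous_const.dist (γ.continuous_extend))
  have hivt := intermediate_value_Icc (zero_le_one (α := ℝ)) hF.continuousOn
  have hmem : ρ ∈ Icc (dist x (γ.extend 0)) (dist x (γ.extend 1)) := by
    rw [Path.extend_zero, Path.extend_one]
    simpa using ⟨hρ0, hρlt⟩
  obtain ⟨t, ht, hFt⟩ := hivt hmem
  set t0 : unitInterval := ⟨t, ht⟩ with ht0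
  have hyd : dist x (γ t0) = ρ := by rw [← γ.extend_apply ht]; exact hFt
  refine ⟨γ t0, hyd, ?_⟩
  obtain ⟨δ₁, hδ₁⟩ := trunc_left_aux p γ t0
  obtain ⟨δ₂, hδ₂⟩ := trunc_right_aux p γ t0
  have hb1 : ENNReal.ofReal ρ ≤ eVariationOn g (Icc 0 t0) := by
    rw [← hδ₁, ← hyd, hlift]
    exact iInf_le _ δ₁
  have hb2 : ENNReal.ofReal (dist (γ t0) w) ≤ eVariationOn g (Icc t0 1) := by
    rw [← hδ₂, hlift]
    exact iInf_le _ δ₂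
  have hIcc : Icc (0 : unitInterval) 1 = Set.univ := by
    ext z
    simp only [mem_Icc, mem_univ, iff_true]
    exact ⟨unitInterval.nonneg', unitInterval.le_one'⟩
  have hadd : eVariationOn g (Icc 0 t0) + eVariationOn g (Icc t0 1) = eVariationOn g Set.univ := by
    have h := eVariationOn.Icc_add_Icc g (s := (Set.univ : Set unitInterval))
      (unitInterval.nonneg' : (0 : unitInterval) ≤ t0) (unitInterval.le_one' : t0 ≤ 1)
      (Set.mem_univ t0)
    simpa [Set.univ_inter, hIcc] using h
  have key : ENNReal.ofReal (dist (γ t0) w) + ENNReal.ofReal ρ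
      < ENNReal.ofReal (dist x w + η) := by
    calc ENNReal.ofReal (dist (γ t0) w) + ENNReal.ofReal ρ
        ≤ eVariationOn g (Icc t0 1) + eVariationOn g (Icc 0 t0) := add_le_add hb2 hb1
      _ = eVariationOn g Set.univ := by rw [add_comm]; exact hadd
      _ < _ := hγ
  rw [← ENNReal.ofReal_add dist_nonneg hρ0] at key
  have := (ENNReal.ofReal_lt_ofReal_iff_of_nonneg (by positivity)).mp key
  linarith

end Aux

/-- Let `N` be a complete, locally compact, proper length metric space and
`p : N' → N` a covering map with `N'` path-connected, where `N'` carries the lifted length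
metric (the distance between two points of `N'` is the infimum over joining paths of the
length of the projected path).  Then every closed ball in `N'` is compact. -/
theorem universal_cover_balls_compact {N N' : Type*} [MetricSpace N] [MetricSpace N']
    [CompleteSpace N] [LocallyCompactSpace N] [ProperSpace N] [PathConnectedSpace N']
    (p : N' → N) (hp : IsCoveringMap p)
    (hlength : ∀ x y : N, ∀ ε > (0 : ℝ), ∃ γ : Path x y,
      eVariationOn (⇑γ) Set.univ ≤ ENNReal.ofReal (dist x y + ε))
    (hlift : ∀ x y : N', ENNReal.ofReal (dist x y) =
      ⨅ γ : Path x y, eVariationOn (p ∘ ⇑γ) Set.univ) :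
    ∀ (x : N') (r : ℝ), IsCompact (Metric.closedBall x r) := by
  intro x r
  have hlip := lip_of_hlift_aux p hlift
  have hsurj : ∀ a : N, Nonempty (p ⁻¹' {a}) := by
    have hcl : IsClopen (Set.range p) := by
      refine ⟨?_, hp.isOpenMap.isOpen_range⟩
      rw [← isOpen_compl_iff, isOpen_iff_forall_mem_open]
      intro z hz
      obtain ⟨_, U, hzU, hUo, _, H, _⟩ := hp z
      refine ⟨U, ?_, hUo, hzU⟩
      rintro u hu ⟨w, rfl⟩
      exact hz ⟨((H ⟨w, hu⟩).2 : N'), (H ⟨w, hu⟩).2.2⟩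
    intro a
    obtain ⟨γ, -⟩ := hlength (p x) a 1 one_pos
    have hsub := (isConnected_range γ.continuous).isPreconnected.subset_isClopen hcl
      ⟨p x, ⟨0, γ.source⟩, ⟨x, rfl⟩⟩
    obtain ⟨w, hw⟩ := hsub ⟨1, γ.target⟩
    exact ⟨⟨w, hw⟩⟩
  rcases lt_or_ge r 0 with hr | hr
  · rw [Metric.closedBall_eq_empty.mpr hr]
    exact isCompact_empty
  -- Lebesgue number for a big compact set downstairs
  set K : Set N := Metric.closedBall (p x) (r + 1) with hK
  have hKc : IsCompact K := isCompact_closedBall _ _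
  obtain ⟨δ, hδpos, hδ⟩ := lebesgue_number_lemma_of_metric hKc
    (fun a : N => (hp a).toTrivialization.open_baseSet)
    (fun z _ => Set.mem_iUnion.mpr ⟨z, (hp z).mem_toTrivialization_baseSet⟩)
  set ε : ℝ := min (δ / 3) 1 with hεdef
  have hε : 0 < ε := lt_min (by linarith) one_pos
  have hε1 : ε ≤ 1 := min_le_right _ _
  have h3ε : 3 * ε ≤ δ := by
    have := min_le_left (δ / 3) 1
    simp only [hεdef]
    linarith [this]
  -- local compactness (uniform on K)
  have hloc : ∀ y : N', p y ∈ K → IsCompact (Metric.closedBall y ε) := by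
    intro y hy
    obtain ⟨a, hsub⟩ := hδ (p y) hy
    refine local_cpt_aux p hp hlift hε y (hp a).toTrivialization ?_
    refine subset_trans ?_ hsub
    intro z hz
    rw [Metric.mem_ball] at hz ⊢
    linarith
  -- induction on radius
  have main : ∀ n : ℕ, IsCompact (Metric.closedBall x (min r (n * (ε / 4)))) := by
    intro n
    induction n with
    | zero =>
      have hmin : min r ((0 : ℕ) * (ε / 4)) = 0 := by
        simp [min_eq_right hr]
      rw [hmin, Metric.closedBall_zero]
      exact isCompact_singleton
    | succ n IH =>
      set ρ' : ℝ := min r (n * (ε / 4)) with hρ'def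
      set C : Set N' := Metric.closedBall x ρ' with hC
      have hρ'0 : 0 ≤ ρ' := le_min hr (by positivity)
      have hρ'r : ρ' ≤ r := min_le_left _ _
      set ρ : ℝ := min r ((n + 1 : ℕ) * (ε / 4)) with hρdef
      have hρρ' : ρ ≤ ρ' + ε / 4 := by
        rcases le_total r (n * (ε / 4)) with h | h
        · have : ρ' = r := min_eq_left h
          have : ρ ≤ r := min_le_left _ _
          linarith [min_eq_left h]
        · have h1 : ρ' = n * (ε / 4) := min_eq_right h
          have h2 : ρ ≤ (n + 1 : ℕ) * (ε / 4) := min_le_right _ _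
          push_cast at h2 ⊢
          rw [h1]
          push_cast
          linarith
      have hρr : ρ ≤ r := min_le_left _ _
      -- finite net of C
      obtain ⟨T, hTcover⟩ := IH.elim_finite_subcover
        (fun z : C => Metric.ball (z : N') (ε / 8))
        (fun z => Metric.isOpen_ball)
        (fun w hw => Set.mem_iUnion.mpr ⟨⟨w, hw⟩, Metric.mem_ball_self (by positivity)⟩)
      have hzK : ∀ z : C, p (z : N') ∈ K := by
        intro z
        have hz : dist (z : N') x ≤ ρ' := Metric.mem_closedBall.mp z.2
        rw [hK, Metric.mem_closedBall]
        calc dist (p (z : N')) (p x) ≤ dist (z : N') x := hlip _ _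
          _ ≤ ρ' := hz
          _ ≤ r + 1 := by linarith
      have hUc : IsCompact (⋃ z ∈ T, Metric.closedBall (z : N') ε) := by
        refine T.finite_toSet.isCompact_biUnion ?_
        intro z _
        exact hloc (z : N') (hzK z)
      refine hUc.of_isClosed_subset Metric.isClosed_closedBall ?_
      intro w hw
      rw [Metric.mem_closedBall, dist_comm] at hw
      rcases le_or_gt (dist x w) ρ' with hcase | hcase
      · have hwC : w ∈ C := by rw [hC, Metric.mem_closedBall, dist_comm]; exact hcase
        obtain ⟨z, hzT⟩ := Set.mem_iUnion.mp (hTcover hwC)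
        simp only [Set.mem_iUnion] at hzT
        obtain ⟨hzmem, hzball⟩ := hzT
        refine Set.mem_biUnion hzmem ?_
        rw [Metric.mem_ball] at hzball
        rw [Metric.mem_closedBall]
        linarith
      · obtain ⟨y, hy1, hy2⟩ := split_point_aux p hlift x w hρ'0 hcase.le
          (η := ε / 8) (by positivity)
        have hyC : y ∈ C := by
          rw [hC, Metric.mem_closedBall, dist_comm, hy1]
        obtain ⟨z, hzT⟩ := Set.mem_iUnion.mp (hTcover hyC)
        simp only [Set.mem_iUnion] at hzT
        obtain ⟨hzmem, hzball⟩ := hzT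
        refine Set.mem_biUnion hzmem ?_
        rw [Metric.mem_ball] at hzball
        rw [Metric.mem_closedBall]
        have hyw : dist y w ≤ ρ - ρ' + ε / 8 := by linarith
        calc dist w (z : N') ≤ dist w y + dist y (z : N') := dist_triangle _ _ _
          _ ≤ (ρ - ρ' + ε / 8) + ε / 8 := by
              rw [dist_comm w y]
              exact add_le_add hyw hzball.le
          _ ≤ ε := by linarith
  -- conclude
  obtain ⟨n, hn⟩ := exists_nat_ge (r / (ε / 4))
  have hrn : r ≤ n * (ε / 4) := by
    rw [div_le_iff₀ (by positivity)] at hn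
    linarith
  have := main n
  rwa [min_eq_left hrn] at this
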